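/- Let X be an Archimedean vector lattice and Y an order ideal of the order dual X~ that separates the points of X. If the canonical image of X in the order dual Y~ is a regular sublattice (i.e., the embedding preserves infima of downward directed sets), then every functional in Y is order continuous on X. -/

import Mathlib

set_option linter.unusedSectionVars false
set_option maxHeartbeats 1000000

open Filter Set

section ODual

variable (E : Type*) [AddCommGroup E] [Preorder E] [Module ℝ E]

/-- The order (bounded) dual: linear functionals bounded on order intervals. -/
noncomputable def obDual : Submodule ℝ (E →ₗ[ℝ] ℝ) where
  carrier := {f | ∀ w : E, ∃ M : ℝ, ∀ x : E, -w ≤ x → x ≤ w → |f x| ≤ M}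
  zero_mem' := fun w => ⟨0, fun x _ _ => by simp⟩
  add_mem' := fun {f g} hf hg w => by
    obtain ⟨M, hM⟩ := hf w
    obtain ⟨N, hN⟩ := hg w
    refine ⟨M + N, fun x h1 h2 => ?_⟩
    calc |(f + g) x| = |f x + g x| := by simp
    _ ≤ |f x| + |g x| := abs_add_le _ _
    _ ≤ M + N := add_le_add (hM x h1 h2) (hN x h1 h2)
  smul_mem' := fun c f hf => by
    intro w
    obtain ⟨M, hM⟩ := hf w
    refine ⟨|c| * M, fun x h1 h2 => ?_⟩
    calc |(c • f) x| = |c| * |f x| := by simp [abs_mul]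
    _ ≤ |c| * M := mul_le_mul_of_nonneg_left (hM x h1 h2) (abs_nonneg c)

/-- The pointwise-on-positive-elements (pre)order on a space of functionals. -/
instance instSubPre (Y : Submodule ℝ (E →ₗ[ℝ] ℝ)) : Preorder Y where
  le f g := ∀ x : E, 0 ≤ x → (f : E →ₗ[ℝ] ℝ) x ≤ (g : E →ₗ[ℝ] ℝ) x
  le_refl f x _ := le_rfl
  le_trans f g h h1 h2 x hx := (h1 x hx).trans (h2 x hx)

/-- The same preorder on the order dual of `Y` (instance search no longer finds it alone). -/
noncomputable instance instSubPreDual (Y : Submodule ℝ (E →ₗ[ℝ] ℝ)) : Preorder (obDual ↥Y) :=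
  instSubPre ↥Y (obDual ↥Y)

variable {E}

theorem subPre_le_iff {Y : Submodule ℝ (E →ₗ[ℝ] ℝ)} {f g : Y} :
    f ≤ g ↔ ∀ x : E, 0 ≤ x → (f : E →ₗ[ℝ] ℝ) x ≤ (g : E →ₗ[ℝ] ℝ) x := Iff.rfl

/-- Order convergence of a net to a limit (sandwich form: eventually
`l - d ≤ x_α ≤ l + d` for every `d` in a set directed downward to `0`). -/
def OConvTo {ι : Type*} [Preorder ι] (x : ι → E) (l : E) : Prop :=
  ∃ D : Set E, D.Nonempty ∧ DirectedOn (· ≥ ·) D ∧ IsGLB D 0 ∧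
    ∀ d ∈ D, ∃ α₀ : ι, ∀ α, α₀ ≤ α → l - d ≤ x α ∧ x α ≤ l + d

/-- Order continuity of a linear functional: `f(x_α) → 0` whenever `x_α ↓ 0`. -/
def OrdContE (f : E →ₗ[ℝ] ℝ) : Prop :=
  ∀ D : Set E, D.Nonempty → DirectedOn (· ≥ ·) D → IsGLB D 0 →
    ∀ ε : ℝ, 0 < ε → ∃ d ∈ D, ∀ e ∈ D, e ≤ d → |f e| < ε

end ODual

section VL

variable (X : Type*) [Lattice X] [AddCommGroup X]
  [CovariantClass X X (· + ·) (· ≤ ·)] [Module ℝ X] [PosSMulMono ℝ X]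

variable {X} in
/-- Unbounded order convergence: `|x_α - l| ⊓ u →o 0` for every `u ≥ 0`. -/
def uoConvTo {ι : Type*} [Preorder ι] (x : ι → X) (l : X) : Prop :=
  ∀ u : X, 0 ≤ u → OConvTo (fun α => |x α - l| ⊓ u) (0 : X)

/-- The canonical evaluation of `x ∈ X` on a space `Y` of functionals on `X`. -/
def hatFun (Y : Submodule ℝ (X →ₗ[ℝ] ℝ)) (x : X) : Y →ₗ[ℝ] ℝ where
  toFun f := (f : X →ₗ[ℝ] ℝ) x
  map_add' f g := by simp
  map_smul' c f := by simp

theorem hatFun_mem (Y : Submodule ℝ (X →ₗ[ℝ] ℝ)) (x : X) :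
    hatFun X Y x ∈ obDual Y := by
  intro w
  refine ⟨(w : X →ₗ[ℝ] ℝ) (x⁺) + (w : X →ₗ[ℝ] ℝ) (x⁻), fun f h1 h2 => ?_⟩
  have hp : (0 : X) ≤ x⁺ := posPart_nonneg x
  have hn : (0 : X) ≤ x⁻ := negPart_nonneg x
  have e1 := (subPre_le_iff.mp h1) _ hp
  have e2 := (subPre_le_iff.mp h2) _ hp
  have e3 := (subPre_le_iff.mp h1) _ hn
  have e4 := (subPre_le_iff.mp h2) _ hn
  have c1 : -((w : X →ₗ[ℝ] ℝ) (x⁺)) ≤ (f : X →ₗ[ℝ] ℝ) (x⁺) := by simpa using e1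
  have c3 : -((w : X →ₗ[ℝ] ℝ) (x⁻)) ≤ (f : X →ₗ[ℝ] ℝ) (x⁻) := by simpa using e3
  have key : (f : X →ₗ[ℝ] ℝ) x
      = (f : X →ₗ[ℝ] ℝ) (x⁺) - (f : X →ₗ[ℝ] ℝ) (x⁻) := by
    rw [← map_sub, posPart_sub_negPart]
  show |(f : X →ₗ[ℝ] ℝ) x| ≤ _
  rw [key]
  have a1 : |(f : X →ₗ[ℝ] ℝ) (x⁺)| ≤ (w : X →ₗ[ℝ] ℝ) (x⁺) := abs_le.mpr ⟨c1, e2⟩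
  have a2 : |(f : X →ₗ[ℝ] ℝ) (x⁻)| ≤ (w : X →ₗ[ℝ] ℝ) (x⁻) := abs_le.mpr ⟨c3, e4⟩
  have := abs_sub ((f : X →ₗ[ℝ] ℝ) (x⁺)) ((f : X →ₗ[ℝ] ℝ) (x⁻))
  linarith

/-- The canonical embedding of `X` into the order dual of `Y ⊆ X~`. -/
def hatEl (Y : Submodule ℝ (X →ₗ[ℝ] ℝ)) (x : X) : obDual Y :=
  ⟨hatFun X Y x, hatFun_mem X Y x⟩

/-- `X~` separates the points of `X`. -/
def SepPoints : Prop := ∀ x : X, x ≠ 0 → ∃ f : obDual X, (f : X →ₗ[ℝ] ℝ) x ≠ 0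

/-- The canonical image of `X` in `X~~` is a regular sublattice:
`x_α ↓ 0` in `X` implies `x̂_α ↓ 0` in `X~~`. -/
def HatRegular : Prop :=
  ∀ D : Set X, D.Nonempty → DirectedOn (· ≥ ·) D → IsGLB D 0 →
    IsGLB (hatEl X (obDual X) '' D) (0 : obDual ↥(obDual X))

variable {X} in
/-- The net `x̂_α` is eventually order bounded in `X~~`. -/
def HatEvOB {ι : Type*} [Preorder ι] (x : ι → X) : Prop :=
  ∃ (b t : obDual ↥(obDual X)) (α₀ : ι), ∀ α, α₀ ≤ α →
    b ≤ hatEl X (obDual X) (x α) ∧ hatEl X (obDual X) (x α) ≤ t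

variable {X} in
/-- Bidual bounded uo-convergence. -/
def bbuoConvTo {ι : Type*} [Preorder ι] (x : ι → X) (l : X) : Prop :=
  uoConvTo x l ∧ HatEvOB x

/-- `X` has the `b`-property: every subset of `X` whose canonical image is
order bounded in `X~~` is order bounded in `X`. -/
def HasBProp : Prop :=
  ∀ A : Set X,
    (∃ b t : obDual ↥(obDual X), ∀ a ∈ A,
        b ≤ hatEl X (obDual X) a ∧ hatEl X (obDual X) a ≤ t) →
    ∃ b t : X, ∀ a ∈ A, b ≤ a ∧ a ≤ t

/-- The Archimedean property for a lattice-ordered group. -/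
def IsArch : Prop := ∀ x y : X, 0 ≤ x → (∀ n : ℕ, n • x ≤ y) → x = 0

end VL


/-- `Y` is an order ideal of the order dual `X~`: a linear subspace of order bounded
functionals that is solid (via the Riesz–Kantorovich formula for the modulus). -/
def IsIdealOfOrderDual {X : Type u} [Lattice X] [AddCommGroup X]
    [CovariantClass X X (· + ·) (· ≤ ·)] [Module ℝ X] [PosSMulMono ℝ X]
    (Y : Submodule ℝ (X →ₗ[ℝ] ℝ)) : Prop :=
  Y ≤ obDual X ∧
  ∀ f ∈ Y, ∀ g ∈ obDual X,
    (∀ x : X, 0 ≤ x → ∀ z : X, |z| ≤ x →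
      |g z| ≤ sSup ((fun w => |f w|) '' {w : X | |w| ≤ x})) → g ∈ Y


section FPlus

variable {X : Type*} [Lattice X] [AddCommGroup X]
  [CovariantClass X X (· + ·) (· ≤ ·)] [Module ℝ X] [PosSMulMono ℝ X]

/-- The Riesz–Kantorovich supremum `sup f([0,x])`. -/
noncomputable def pFun (f : X →ₗ[ℝ] ℝ) (x : X) : ℝ := sSup (f '' Set.Icc 0 x)

theorem pFun_bddAbove {f : X →ₗ[ℝ] ℝ} (hf : f ∈ obDual X) {x : X} (hx : 0 ≤ x) :
    BddAbove (f '' Set.Icc 0 x) := by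
  obtain ⟨M, hM⟩ := hf x
  refine ⟨M, ?_⟩
  rintro r ⟨w, ⟨h0, h1⟩, rfl⟩
  exact (le_abs_self _).trans (hM w ((neg_nonpos.2 hx).trans h0) h1)

theorem pFun_nonempty {f : X →ₗ[ℝ] ℝ} {x : X} (hx : 0 ≤ x) :
    (f '' Set.Icc 0 x).Nonempty :=
  ⟨f 0, ⟨0, ⟨le_rfl, hx⟩, rfl⟩⟩

theorem pFun_nonneg {f : X →ₗ[ℝ] ℝ} {x : X} (hx : 0 ≤ x) (hf : f ∈ obDual X) :
    0 ≤ pFun f x := by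
  have : f 0 ≤ pFun f x := le_csSup (pFun_bddAbove hf hx) ⟨0, ⟨le_rfl, hx⟩, rfl⟩
  simpa using this

theorem le_pFun {f : X →ₗ[ℝ] ℝ} (hf : f ∈ obDual X) {x : X} (hx : 0 ≤ x) :
    f x ≤ pFun f x :=
  le_csSup (pFun_bddAbove hf hx) ⟨x, ⟨hx, le_rfl⟩, rfl⟩

theorem pFun_zero (f : X →ₗ[ℝ] ℝ) : pFun f 0 = 0 := by
  have : Set.Icc (0 : X) 0 = {0} := by ext w; simp [le_antisymm_iff, and_comm]
  simp [pFun, this]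

theorem pFun_mono {f : X →ₗ[ℝ] ℝ} (hf : f ∈ obDual X) {x y : X} (hx : 0 ≤ x) (hxy : x ≤ y) :
    pFun f x ≤ pFun f y :=
  csSup_le_csSup (pFun_bddAbove hf (hx.trans hxy)) (pFun_nonempty hx)
    (Set.image_mono (Set.Icc_subset_Icc le_rfl hxy))

theorem pFun_add {f : X →ₗ[ℝ] ℝ} (hf : f ∈ obDual X) {x y : X} (hx : 0 ≤ x) (hy : 0 ≤ y) :
    pFun f (x + y) = pFun f x + pFun f y := by
  have hxy : 0 ≤ x + y := add_nonneg hx hy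
  apply le_antisymm
  · apply csSup_le (pFun_nonempty hxy)
    rintro r ⟨w, ⟨hw0, hwxy⟩, rfl⟩
    have h1 : w ⊓ x ∈ Set.Icc (0 : X) x := ⟨le_inf hw0 hx, inf_le_right⟩
    have h2 : w - w ⊓ x ∈ Set.Icc (0 : X) y := by
      constructor
      · exact sub_nonneg.2 inf_le_left
      · rw [sub_le_comm]
        exact le_inf (sub_le_self w hy) (sub_le_iff_le_add.2 hwxy)
    have : f w = f (w ⊓ x) + f (w - w ⊓ x) := by rw [← map_add]; congr 1; abel
    rw [this]
    exact add_le_add (le_csSup (pFun_bddAbove hf hx) ⟨_, h1, rfl⟩)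
      (le_csSup (pFun_bddAbove hf hy) ⟨_, h2, rfl⟩)
  · have key : ∀ r ∈ f '' Set.Icc 0 x, ∀ s ∈ f '' Set.Icc 0 y, r + s ≤ pFun f (x + y) := by
      rintro r ⟨w1, ⟨h10, h1x⟩, rfl⟩ s ⟨w2, ⟨h20, h2y⟩, rfl⟩
      rw [← map_add]
      exact le_csSup (pFun_bddAbove hf hxy) ⟨w1 + w2, ⟨add_nonneg h10 h20, add_le_add h1x h2y⟩, rfl⟩
    have h1 : pFun f x ≤ pFun f (x + y) - pFun f y := by
      apply csSup_le (pFun_nonempty hx)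
      intro r hr
      have h2 : pFun f y ≤ pFun f (x + y) - r := by
        apply csSup_le (pFun_nonempty hy)
        intro s hs
        linarith [key r hr s hs]
      linarith
    linarith

theorem smul_sup_of_nonneg {c : ℝ} (hc : 0 ≤ c) (a b : X) :
    c • (a ⊔ b) = c • a ⊔ c • b := by
  rcases eq_or_lt_of_le hc with rfl | hc'
  · simp
  · apply le_antisymm
    · have h : a ⊔ b ≤ c⁻¹ • (c • a ⊔ c • b) := by
        apply sup_le
        · have := smul_le_smul_of_nonneg_left (le_sup_left (a := c • a) (b := c • b))
            (inv_nonneg.2 hc)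
          rwa [inv_smul_smul₀ hc'.ne'] at this
        · have := smul_le_smul_of_nonneg_left (le_sup_right (a := c • a) (b := c • b))
            (inv_nonneg.2 hc)
          rwa [inv_smul_smul₀ hc'.ne'] at this
      have := smul_le_smul_of_nonneg_left h hc
      rwa [smul_inv_smul₀ hc'.ne'] at this
    · exact sup_le (smul_le_smul_of_nonneg_left le_sup_left hc)
        (smul_le_smul_of_nonneg_left le_sup_right hc)

theorem posPart_smul_nonneg {c : ℝ} (hc : 0 ≤ c) (x : X) : (c • x)⁺ = c • x⁺ := by
  rw [posPart_def, posPart_def, ← smul_zero c, ← smul_sup_of_nonneg hc, smul_zero]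

theorem negPart_smul_nonneg {c : ℝ} (hc : 0 ≤ c) (x : X) : (c • x)⁻ = c • x⁻ := by
  rw [negPart_def, negPart_def, ← smul_neg, ← smul_zero c, ← smul_sup_of_nonneg hc, smul_zero]

theorem pFun_smul {f : X →ₗ[ℝ] ℝ} (hf : f ∈ obDual X) {x : X} (hx : 0 ≤ x)
    {c : ℝ} (hc : 0 ≤ c) : pFun f (c • x) = c * pFun f x := by
  rcases eq_or_lt_of_le hc with rfl | hc'
  · simp [pFun_zero]
  · have himg : f '' Set.Icc 0 (c • x) = (fun r => c * r) '' (f '' Set.Icc 0 x) := by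
      ext r
      constructor
      · rintro ⟨w, ⟨h0, h1⟩, rfl⟩
        refine ⟨f (c⁻¹ • w), ⟨c⁻¹ • w, ⟨smul_nonneg (inv_nonneg.2 hc) h0, ?_⟩, rfl⟩, ?_⟩
        · have := smul_le_smul_of_nonneg_left h1 (inv_nonneg.2 hc)
          rwa [inv_smul_smul₀ hc'.ne'] at this
        · show c * f (c⁻¹ • w) = f w
          rw [← smul_eq_mul, ← map_smul, smul_inv_smul₀ hc'.ne']
      · rintro ⟨_, ⟨w, ⟨h0, h1⟩, rfl⟩, rfl⟩
        exact ⟨c • w, ⟨smul_nonneg hc h0, smul_le_smul_of_nonneg_left h1 hc⟩, by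
          show f (c • w) = c * f w
          rw [map_smul, smul_eq_mul]⟩
    rw [pFun, himg]
    have hlub : IsLUB (f '' Set.Icc 0 x) (sSup (f '' Set.Icc 0 x)) :=
      isLUB_csSup (pFun_nonempty hx) (pFun_bddAbove hf hx)
    have hlub2 : IsLUB ((fun r => c * r) '' (f '' Set.Icc 0 x))
        (c * sSup (f '' Set.Icc 0 x)) := by
      constructor
      · rintro _ ⟨s, hs, rfl⟩
        exact mul_le_mul_of_nonneg_left (hlub.1 hs) hc
      · intro b hb
        have : sSup (f '' Set.Icc 0 x) ≤ c⁻¹ * b := by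
          apply hlub.2
          rintro s hs
          have := hb ⟨s, hs, rfl⟩
          calc s = c⁻¹ * (c * s) := by field_simp
          _ ≤ c⁻¹ * b := mul_le_mul_of_nonneg_left this (inv_nonneg.2 hc)
        calc c * sSup (f '' Set.Icc 0 x) ≤ c * (c⁻¹ * b) :=
              mul_le_mul_of_nonneg_left this hc
        _ = b := by field_simp
    exact hlub2.csSup_eq ((pFun_nonempty hx).image _)

/-- The positive part `f⁺` of an order bounded functional. -/
noncomputable def fPlus (f : X →ₗ[ℝ] ℝ) (hf : f ∈ obDual X) : X →ₗ[ℝ] ℝ where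
  toFun x := pFun f x⁺ - pFun f x⁻
  map_add' x y := by
    have e1 : (x + y)⁺ + (x⁻ + y⁻) = (x + y)⁻ + (x⁺ + y⁺) := by
      have h1 : (x + y)⁺ = x + y + (x + y)⁻ := eq_add_of_sub_eq (posPart_sub_negPart _)
      have h2 : x⁺ = x + x⁻ := eq_add_of_sub_eq (posPart_sub_negPart _)
      have h3 : y⁺ = y + y⁻ := eq_add_of_sub_eq (posPart_sub_negPart _)
      rw [h1, h2, h3]; abel
    have e2 := congrArg (pFun f) e1
    rw [pFun_add hf (posPart_nonneg _) (add_nonneg (negPart_nonneg _) (negPart_nonneg _)),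
        pFun_add hf (negPart_nonneg _) (add_nonneg (posPart_nonneg _) (posPart_nonneg _)),
        pFun_add hf (negPart_nonneg _) (negPart_nonneg _),
        pFun_add hf (posPart_nonneg _) (posPart_nonneg _)] at e2
    show pFun f (x + y)⁺ - pFun f (x + y)⁻ =
      (pFun f x⁺ - pFun f x⁻) + (pFun f y⁺ - pFun f y⁻)
    linarith
  map_smul' c x := by
    simp only [RingHom.id_apply, smul_eq_mul]
    rcases le_or_gt 0 c with hc | hc
    · rw [posPart_smul_nonneg hc, negPart_smul_nonneg hc,
        pFun_smul hf (posPart_nonneg _) hc, pFun_smul hf (negPart_nonneg _) hc]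
      ring
    · have hc' : 0 ≤ -c := by linarith
      have hcx : c • x = (-c) • (-x) := by rw [neg_smul, smul_neg, neg_neg]
      rw [hcx, posPart_smul_nonneg hc', negPart_smul_nonneg hc', posPart_neg, negPart_neg,
        pFun_smul hf (negPart_nonneg _) hc', pFun_smul hf (posPart_nonneg _) hc']
      ring

theorem fPlus_apply_of_nonneg {f : X →ₗ[ℝ] ℝ} (hf : f ∈ obDual X) {x : X} (hx : 0 ≤ x) :
    fPlus f hf x = pFun f x := by
  show pFun f x⁺ - pFun f x⁻ = pFun f x
  rw [posPart_eq_self.2 hx, negPart_eq_zero.2 hx, pFun_zero, sub_zero]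

theorem abs_fPlus_le {f : X →ₗ[ℝ] ℝ} (hf : f ∈ obDual X) {z x : X}
    (h1 : z⁺ ≤ x) (h2 : z⁻ ≤ x) (hx : 0 ≤ x) : |fPlus f hf z| ≤ pFun f x := by
  have a1 : pFun f z⁺ ≤ pFun f x := pFun_mono hf (posPart_nonneg _) h1
  have a2 : pFun f z⁻ ≤ pFun f x := pFun_mono hf (negPart_nonneg _) h2
  have b1 : 0 ≤ pFun f z⁺ := pFun_nonneg (posPart_nonneg _) hf
  have b2 : 0 ≤ pFun f z⁻ := pFun_nonneg (negPart_nonneg _) hf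
  have : fPlus f hf z = pFun f z⁺ - pFun f z⁻ := rfl
  rw [this, abs_le]
  constructor <;> linarith

theorem fPlus_mem_obDual {f : X →ₗ[ℝ] ℝ} (hf : f ∈ obDual X) :
    fPlus f hf ∈ obDual X := by
  intro w
  refine ⟨pFun f w⁺, fun z hz1 hz2 => ?_⟩
  have h1 : z⁺ ≤ w⁺ := posPart_mono hz2
  have h2 : z⁻ ≤ w⁺ := by
    rw [← posPart_neg]
    exact posPart_mono (neg_le.1 hz1)
  exact abs_fPlus_le hf h1 h2 (posPart_nonneg _)

end FPlus


section KeyLemma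

variable {X : Type*} [Lattice X] [AddCommGroup X]
  [CovariantClass X X (· + ·) (· ≤ ·)] [Module ℝ X] [PosSMulMono ℝ X]

theorem fPlus_domination {f : X →ₗ[ℝ] ℝ} (hf : f ∈ obDual X) :
    ∀ x : X, 0 ≤ x → ∀ z : X, |z| ≤ x →
      |fPlus f hf z| ≤ sSup ((fun w => |f w|) '' {w : X | |w| ≤ x}) := by
  intro x hx z hz
  have habs : ∀ w : X, |w| ≤ x → -x ≤ w ∧ w ≤ x := by
    intro w hw
    constructor
    · have : -w ≤ x := (neg_le_abs w).trans hw
      exact neg_le.1 this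
    · exact (le_abs_self w).trans hw
  have hbdd : BddAbove ((fun w => |f w|) '' {w : X | |w| ≤ x}) := by
    obtain ⟨M, hM⟩ := hf x
    refine ⟨M, ?_⟩
    rintro r ⟨w, hw, rfl⟩
    obtain ⟨hw1, hw2⟩ := habs w hw
    exact hM w hw1 hw2
  have h1 : z⁺ ≤ x := by
    calc z⁺ ≤ |z|⁺ := posPart_mono (le_abs_self z)
    _ = |z| := posPart_eq_self.2 (abs_nonneg z)
    _ ≤ x := hz
  have h2 : z⁻ ≤ x := by
    rw [← posPart_neg]
    calc (-z)⁺ ≤ |z|⁺ := posPart_mono (neg_le_abs z)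
    _ = |z| := posPart_eq_self.2 (abs_nonneg z)
    _ ≤ x := hz
  refine (abs_fPlus_le hf h1 h2 hx).trans ?_
  apply csSup_le (pFun_nonempty hx)
  rintro r ⟨w, ⟨hw0, hwx⟩, rfl⟩
  have hwmem : w ∈ {w : X | |w| ≤ x} := by
    show |w| ≤ x
    rwa [abs_of_nonneg hw0]
  exact (le_abs_self (f w)).trans (le_csSup hbdd ⟨w, hwmem, rfl⟩)

theorem key_lemma (Y : Submodule ℝ (X →ₗ[ℝ] ℝ))
    (hideal : IsIdealOfOrderDual Y)
    (hreg : ∀ D : Set X, D.Nonempty → DirectedOn (· ≥ ·) D → IsGLB D 0 →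
      IsGLB (hatEl X Y '' D) (0 : obDual ↥Y))
    (f : X →ₗ[ℝ] ℝ) (hfY : f ∈ Y)
    (D : Set X) (hne : D.Nonempty) (hdir : DirectedOn (· ≥ ·) D) (hglb : IsGLB D 0)
    (ε : ℝ) (hε : 0 < ε)
    (hbad : ∀ d ∈ D, ∃ e ∈ D, e ≤ d ∧ ε ≤ f e) : False := by
  classical
  obtain ⟨d₀, hd₀⟩ := hne
  have h0 : ∀ d ∈ D, (0 : X) ≤ d := fun d hd => hglb.1 hd
  set S : Set X := {e | e ∈ D ∧ ε ≤ f e} with hS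
  set T : X → Set X := fun d => {e | e ∈ D ∧ e ≤ d} with hT
  set F : Filter X := ⨅ d : D, Filter.principal (T ↑d ∩ S) with hF
  have hTS : ∀ d ∈ D, (T d ∩ S).Nonempty := by
    intro d hd
    obtain ⟨e, he, hed, hfe⟩ := hbad d hd
    exact ⟨e, ⟨he, hed⟩, ⟨he, hfe⟩⟩
  haveI : Nonempty ↥D := ⟨⟨d₀, hd₀⟩⟩
  have hdirF : Directed (· ≥ ·) (fun d : D => Filter.principal (T ↑d ∩ S)) := by
    rintro ⟨d1, hd1⟩ ⟨d2, hd2⟩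
    obtain ⟨d, hd, hdd1, hdd2⟩ := hdir d1 hd1 d2 hd2
    refine ⟨⟨d, hd⟩, ?_, ?_⟩ <;>
      · simp only [Filter.le_principal_iff, Filter.mem_principal]
        intro e ⟨⟨heD, hed⟩, heS⟩
        exact ⟨⟨heD, hed.trans (by assumption)⟩, heS⟩
  haveI hFne : F.NeBot := by
    apply Filter.iInf_neBot_of_directed' hdirF
    rintro ⟨d, hd⟩
    exact Filter.principal_neBot_iff.2 (hTS d hd)
  set U : Ultrafilter X := Ultrafilter.of F with hU
  have hUF : (U : Filter X) ≤ F := Ultrafilter.of_le F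
  have hmemU : ∀ d ∈ D, T d ∩ S ∈ U := by
    intro d hd
    apply hUF
    exact Filter.mem_iInf_of_mem ⟨d, hd⟩ (Filter.mem_principal_self _)
  -- every element of Y has a limit along U
  have hconv : ∀ g : ↥Y, ∃ a : ℝ,
      Filter.Tendsto (fun e => (g : X →ₗ[ℝ] ℝ) e) (U : Filter X) (nhds a) := by
    intro g
    obtain ⟨M, hM⟩ := hideal.1 g.2 d₀
    have hsub : T d₀ ∩ S ⊆ (fun e => (g : X →ₗ[ℝ] ℝ) e) ⁻¹' Set.Icc (-M) M := by
      rintro e ⟨⟨heD, hed⟩, _⟩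
      have := hM e (((neg_nonpos.2 (h0 d₀ hd₀)).trans (h0 e heD))) hed
      exact abs_le.1 this
    have hmem : Set.Icc (-M) M ∈ Filter.map (fun e => (g : X →ₗ[ℝ] ℝ) e) (U : Filter X) :=
      Filter.mem_map.2 (Filter.mem_of_superset (hmemU d₀ hd₀) hsub)
    obtain ⟨a, _, ha⟩ := isCompact_Icc.ultrafilter_le_nhds
      (Ultrafilter.map (fun e => (g : X →ₗ[ℝ] ℝ) e) U)
      (Filter.le_principal_iff.2 (by rwa [Ultrafilter.coe_map]))
    exact ⟨a, ha⟩
  choose bval hbval using hconv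
  set blin : ↥Y →ₗ[ℝ] ℝ :=
    { toFun := bval
      map_add' := fun g h => by
        refine tendsto_nhds_unique (hbval (g + h)) ?_
        have := (hbval g).add (hbval h)
        convert this using 2 with e
        rfl

      map_smul' := fun c g => by
        refine tendsto_nhds_unique (hbval (c • g)) ?_
        have := (hbval g).const_mul c
        simp only [RingHom.id_apply, smul_eq_mul]
        convert this using 2 with e
        rfl } with hblin
  have hblin_apply : ∀ g : ↥Y, blin g = bval g := fun g => rfl
  have hOb : blin ∈ obDual ↥Y := by
    intro w
    obtain ⟨M, hM⟩ := hideal.1 w.2 d₀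
    refine ⟨M, fun g hg1 hg2 => ?_⟩
    rw [hblin_apply]
    have hev : ∀ e ∈ T d₀ ∩ S, |(g : X →ₗ[ℝ] ℝ) e| ≤ M := by
      rintro e ⟨⟨heD, hed⟩, _⟩
      have he0 : (0 : X) ≤ e := h0 e heD
      have hwe : |(w : X →ₗ[ℝ] ℝ) e| ≤ M :=
        hM e ((neg_nonpos.2 (h0 d₀ hd₀)).trans he0) hed
      have l1 := (subPre_le_iff.mp hg1) e he0
      have l2 := (subPre_le_iff.mp hg2) e he0
      have l1' : -((w : X →ₗ[ℝ] ℝ) e) ≤ (g : X →ₗ[ℝ] ℝ) e := by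
        simpa using l1
      rw [abs_le]
      constructor
      · have : -M ≤ -((w : X →ₗ[ℝ] ℝ) e) := by
          have := (le_abs_self _).trans hwe
          linarith
        linarith
      · exact l2.trans ((le_abs_self _).trans hwe)
    have habs : Filter.Tendsto (fun e => |(g : X →ₗ[ℝ] ℝ) e|) (U : Filter X)
        (nhds |bval g|) := (hbval g).abs
    exact le_of_tendsto habs (Filter.eventually_of_mem (hmemU d₀ hd₀) hev)
  set B : ↥(obDual ↥Y) := ⟨blin, hOb⟩ with hB
  have hlow : B ∈ lowerBounds (hatEl X Y '' D) := by
    rintro _ ⟨d, hd, rfl⟩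
    apply subPre_le_iff.mpr
    intro g hg
    show bval g ≤ (g : X →ₗ[ℝ] ℝ) d
    refine le_of_tendsto (hbval g) (Filter.eventually_of_mem (hmemU d hd) ?_)
    rintro e ⟨⟨heD, hed⟩, _⟩
    have hge : (0 : ℝ) ≤ (g : X →ₗ[ℝ] ℝ) (d - e) := by
      have := (subPre_le_iff.mp hg) (d - e) (sub_nonneg.2 hed)
      simpa using this
    have : (g : X →ₗ[ℝ] ℝ) (d - e)
        = (g : X →ₗ[ℝ] ℝ) d - (g : X →ₗ[ℝ] ℝ) e := map_sub _ _ _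
    linarith [this ▸ hge]
  have hB0 : B ≤ 0 := (hreg D ⟨d₀, hd₀⟩ hdir hglb).2 hlow
  -- the positive part of f
  have hf' : f ∈ obDual X := hideal.1 hfY
  have hfpY : fPlus f hf' ∈ Y :=
    hideal.2 f hfY (fPlus f hf') (fPlus_mem_obDual hf') (fPlus_domination hf')
  set G : ↥Y := ⟨fPlus f hf', hfpY⟩ with hG
  have hGpos : (0 : ↥Y) ≤ G := by
    rw [subPre_le_iff]
    intro x hx
    show (0 : X →ₗ[ℝ] ℝ) x ≤ fPlus f hf' x
    rw [LinearMap.zero_apply, fPlus_apply_of_nonneg hf' hx]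
    exact pFun_nonneg hx hf'
  have hBG : bval G ≤ 0 := by
    have := (subPre_le_iff.mp hB0) G hGpos
    exact (by simpa using this : (B : ↥Y →ₗ[ℝ] ℝ) G ≤ 0)
  have hεG : ε ≤ bval G := by
    refine ge_of_tendsto (hbval G) (Filter.eventually_of_mem (hmemU d₀ hd₀) ?_)
    rintro e ⟨⟨heD, _⟩, ⟨_, hfe⟩⟩
    have he0 : (0 : X) ≤ e := h0 e heD
    show ε ≤ fPlus f hf' e
    rw [fPlus_apply_of_nonneg hf' he0]
    exact hfe.trans (le_pFun hf' he0)
  linarith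

end KeyLemma

/-- If the canonical image of `X` in `Y~` is a regular sublattice, then every
functional in the separating order ideal `Y ⊆ X~` is order continuous. -/
theorem statement0 {X : Type u} [Lattice X] [AddCommGroup X]
    [CovariantClass X X (· + ·) (· ≤ ·)] [Module ℝ X] [PosSMulMono ℝ X]
    (harch : IsArch X)
    (Y : Submodule ℝ (X →ₗ[ℝ] ℝ))
    (hideal : IsIdealOfOrderDual Y)
    (hsep : ∀ x : X, x ≠ 0 → ∃ f ∈ Y, f x ≠ 0)
    (hreg : ∀ D : Set X, D.Nonempty → DirectedOn (· ≥ ·) D → IsGLB D 0 →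
      IsGLB (hatEl X Y '' D) (0 : obDual ↥Y)) :
    ∀ f ∈ Y, OrdContE f := by
  intro f hf D hne hdir hglb ε hε
  by_contra hcon
  push_neg at hcon
  by_cases hcase : ∀ d ∈ D, ∃ e ∈ D, e ≤ d ∧ ε ≤ f e
  · exact key_lemma Y hideal hreg f hf D hne hdir hglb ε hε hcase
  · push_neg at hcase
    obtain ⟨d₁, hd₁, hd₁'⟩ := hcase
    refine key_lemma Y hideal hreg (-f) (neg_mem hf) D hne hdir hglb ε hε ?_
    intro d hd
    obtain ⟨d', hd', hle1, hle2⟩ := hdir d hd d₁ hd₁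
    obtain ⟨e, he, hed', hfe⟩ := hcon d' hd'
    refine ⟨e, he, hed'.trans hle1, ?_⟩
    have hlt := hd₁' e he (hed'.trans hle2)
    simp only [LinearMap.neg_apply]
    rcases abs_cases (f e) with ⟨h1, h2⟩ | ⟨h1, h2⟩ <;> linarith
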